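/- In the q-Brauer algebra Br_n(r,q), for k ≥ 1 with 2k + 2 ≤ n and indices j_1, j_2 with 2k ≤ j_1 ≤ n−1 and 2k+1 ≤ j_2 ≤ n−1, one has e · (g_2 g_3 ⋯ g_{j_2}) · (g_1^{−1} g_2^{−1} ⋯ g_{j_1}^{−1}) · e_{(k)} = e_{(k+1)} · (g_{2k+2} g_{2k+3} ⋯ g_{j_2}) · (g_{2k+1}^{−1} g_{2k+2}^{−1} ⋯ g_{j_1}^{−1}), where an ascending product g_a g_{a+1} ⋯ g_b (or of inverses) with b < a is interpreted as 1. -/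

import Mathlib

noncomputable section

namespace qB

/-- Generators of the q-Brauer algebra: `g i` (intended for `1 ≤ i ≤ n-1`) and `e`. -/
inductive BrGen : Type
  | g : ℕ → BrGen
  | e : BrGen

/-- The generator `g i` inside the free algebra. -/
def fg (R : Type) [CommRing R] (i : ℕ) : FreeAlgebra R BrGen := FreeAlgebra.ι R (BrGen.g i)

/-- The generator `e` inside the free algebra. -/
def fe (R : Type) [CommRing R] : FreeAlgebra R BrGen := FreeAlgebra.ι R BrGen.e

/-- The element `g i ⁻¹ = q⁻¹ g i + (q⁻¹ - 1)·1` inside the free algebra (`qi = q⁻¹`). -/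
def fgInv (R : Type) [CommRing R] (qi : R) (i : ℕ) : FreeAlgebra R BrGen :=
  qi • fg R i + (qi - 1) • (1 : FreeAlgebra R BrGen)

/-- The word `g 2 * g 3 * (g 1)⁻¹ * (g 2)⁻¹`. -/
def fE2w (R : Type) [CommRing R] (qi : R) : FreeAlgebra R BrGen :=
  fg R 2 * fg R 3 * fgInv R qi 1 * fgInv R qi 2

/-- Defining relations of the q-Brauer algebra `Br_n(r,q)`; out-of-range generators are
killed (relation `zero`), so the algebra is presented exactly on `g 1, …, g (n-1), e`. -/
inductive BrRel (R : Type) [CommRing R] (n : ℕ) (q qi r δ : R) :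
    FreeAlgebra R BrGen → FreeAlgebra R BrGen → Prop
  | zero (i : ℕ) (h : i = 0 ∨ n ≤ i) : BrRel R n q qi r δ (fg R i) 0
  | quad (i : ℕ) (h1 : 1 ≤ i) (h2 : i < n) :
      BrRel R n q qi r δ (fg R i * fg R i)
        ((q - 1) • fg R i + q • (1 : FreeAlgebra R BrGen))
  | comm (i j : ℕ) (h1 : 1 ≤ i) (h2 : i + 1 < j) (h3 : j < n) :
      BrRel R n q qi r δ (fg R i * fg R j) (fg R j * fg R i)
  | braid (i : ℕ) (h1 : 1 ≤ i) (h2 : i + 1 < n) :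
      BrRel R n q qi r δ (fg R i * fg R (i + 1) * fg R i)
        (fg R (i + 1) * fg R i * fg R (i + 1))
  | e1 : BrRel R n q qi r δ (fe R * fe R) (δ • fe R)
  | e2comm (i : ℕ) (h1 : 3 ≤ i) (h2 : i < n) :
      BrRel R n q qi r δ (fe R * fg R i) (fg R i * fe R)
  | e2g1 (h : 2 ≤ n) : BrRel R n q qi r δ (fe R * fg R 1) (q • fe R)
  | e2g2 (h : 3 ≤ n) : BrRel R n q qi r δ (fe R * fg R 2 * fe R) (r • fe R)
  | e2g2inv (h : 3 ≤ n) : BrRel R n q qi r δ (fe R * fgInv R qi 2 * fe R) (qi • fe R)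
  | e3l (h : 4 ≤ n) :
      BrRel R n q qi r δ (fE2w R qi * (fe R * fE2w R qi * fe R)) (fe R * fE2w R qi * fe R)
  | e3r (h : 4 ≤ n) :
      BrRel R n q qi r δ ((fe R * fE2w R qi * fe R) * fE2w R qi) (fe R * fE2w R qi * fe R)

/-- The q-Brauer algebra `Br_n(r,q)` over `R`, with `qi = q⁻¹` and `δ = (r-1)/(q-1)`. -/
abbrev QBr (R : Type) [CommRing R] (n : ℕ) (q qi r δ : R) : Type :=
  RingQuot (BrRel R n q qi r δ)

/-- The generator `g i` of the q-Brauer algebra. -/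
def G (R : Type) [CommRing R] (n : ℕ) (q qi r δ : R) (i : ℕ) : QBr R n q qi r δ :=
  RingQuot.mkAlgHom R (BrRel R n q qi r δ) (fg R i)

/-- The generator `e` of the q-Brauer algebra. -/
def E (R : Type) [CommRing R] (n : ℕ) (q qi r δ : R) : QBr R n q qi r δ :=
  RingQuot.mkAlgHom R (BrRel R n q qi r δ) (fe R)

/-- The inverse `(g i)⁻¹ = q⁻¹ g i + (q⁻¹-1)` of the generator `g i`. -/
def GInv (R : Type) [CommRing R] (n : ℕ) (q qi r δ : R) (i : ℕ) : QBr R n q qi r δ :=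
  RingQuot.mkAlgHom R (BrRel R n q qi r δ) (fgInv R qi i)

/-- Ascending product `g a * g (a+1) * ⋯ * g b` (equal to `1` when `b < a`). -/
def ga (R : Type) [CommRing R] (n : ℕ) (q qi r δ : R) (a b : ℕ) : QBr R n q qi r δ :=
  ((List.range' a (b + 1 - a)).map (G R n q qi r δ)).prod

/-- Ascending product of inverses `(g a)⁻¹ * (g (a+1))⁻¹ * ⋯ * (g b)⁻¹`. -/
def gaInv (R : Type) [CommRing R] (n : ℕ) (q qi r δ : R) (a b : ℕ) : QBr R n q qi r δ :=
  ((List.range' a (b + 1 - a)).map (GInv R n q qi r δ)).prod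

/-- Descending product `g a * g (a-1) * ⋯ * g b` (equal to `1` when `a < b`). -/
def gd (R : Type) [CommRing R] (n : ℕ) (q qi r δ : R) (a b : ℕ) : QBr R n q qi r δ :=
  ((List.range' b (a + 1 - b)).reverse.map (G R n q qi r δ)).prod

/-- Descending product of inverses `(g a)⁻¹ * (g (a-1))⁻¹ * ⋯ * (g b)⁻¹`. -/
def gdInv (R : Type) [CommRing R] (n : ℕ) (q qi r δ : R) (a b : ℕ) : QBr R n q qi r δ :=
  ((List.range' b (a + 1 - b)).reverse.map (GInv R n q qi r δ)).prod

/-- The elements `e_(k)`: `e_(0) = 1`, `e_(1) = e`,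
`e_(k+1) = e * (g 2 ⋯ g (2k+1)) * (g 1)⁻¹ ⋯ (g 2k)⁻¹ * e_(k)`. -/
def ek (R : Type) [CommRing R] (n : ℕ) (q qi r δ : R) : ℕ → QBr R n q qi r δ
  | 0 => 1
  | k + 1 => E R n q qi r δ * ga R n q qi r δ 2 (2 * k + 1) *
      gaInv R n q qi r δ 1 (2 * k) * ek R n q qi r δ k

end qB

namespace qB

section aux

variable (R : Type) [CommRing R] (n : ℕ) (q qi r δ : R)

lemma G_comm {i j : ℕ} (h1 : 1 ≤ i) (h2 : i + 1 < j) (h3 : j < n) :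
    Commute (G R n q qi r δ i) (G R n q qi r δ j) := by
  have h := RingQuot.mkAlgHom_rel R
    (BrRel.comm (R := R) (n := n) (q := q) (qi := qi) (r := r) (δ := δ) i j h1 h2 h3)
  simp only [map_mul] at h
  exact h

lemma E_G_comm {i : ℕ} (h1 : 3 ≤ i) (h2 : i < n) :
    Commute (E R n q qi r δ) (G R n q qi r δ i) := by
  have h := RingQuot.mkAlgHom_rel R
    (BrRel.e2comm (R := R) (n := n) (q := q) (qi := qi) (r := r) (δ := δ) i h1 h2)
  simp only [map_mul] at h
  exact h

lemma GInv_eq (i : ℕ) :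
    GInv R n q qi r δ i = qi • G R n q qi r δ i + (qi - 1) • 1 := by
  simp only [GInv, fgInv, map_add, map_smul, map_one, G]

lemma comm_GInv_right {x : QBr R n q qi r δ} {j : ℕ}
    (h : Commute x (G R n q qi r δ j)) : Commute x (GInv R n q qi r δ j) := by
  rw [GInv_eq]
  exact (h.smul_right qi).add_right ((Commute.one_right x).smul_right (qi - 1))

lemma commute_ga {x : QBr R n q qi r δ} (a b : ℕ)
    (h : ∀ i, a ≤ i → i ≤ b → Commute x (G R n q qi r δ i)) :
    Commute x (ga R n q qi r δ a b) := by
  apply Commute.list_prod_right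
  intro y hy
  simp only [List.mem_map, List.mem_range'_1] at hy
  obtain ⟨i, ⟨hi1, hi2⟩, rfl⟩ := hy
  exact h i hi1 (by omega)

lemma commute_gaInv {x : QBr R n q qi r δ} (a b : ℕ)
    (h : ∀ i, a ≤ i → i ≤ b → Commute x (G R n q qi r δ i)) :
    Commute x (gaInv R n q qi r δ a b) := by
  apply Commute.list_prod_right
  intro y hy
  simp only [List.mem_map, List.mem_range'_1] at hy
  obtain ⟨i, ⟨hi1, hi2⟩, rfl⟩ := hy
  exact comm_GInv_right R n q qi r δ (h i hi1 (by omega))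

lemma ga_split (a c b : ℕ) (h1 : a ≤ c + 1) (h2 : c ≤ b) :
    ga R n q qi r δ a b = ga R n q qi r δ a c * ga R n q qi r δ (c + 1) b := by
  unfold ga
  have hl : List.range' a (b + 1 - a) =
      List.range' a (c + 1 - a) ++ List.range' (c + 1) (b + 1 - (c + 1)) := by
    have h3 := List.range'_append_1 (s := a) (m := c + 1 - a) (n := b - c)
    rw [show a + (c + 1 - a) = c + 1 by omega] at h3
    rw [show c + 1 - a + (b - c) = b + 1 - a by omega] at h3
    rw [show b + 1 - (c + 1) = b - c by omega]
    exact h3.symm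
  rw [hl, List.map_append, List.prod_append]

lemma gaInv_split (a c b : ℕ) (h1 : a ≤ c + 1) (h2 : c ≤ b) :
    gaInv R n q qi r δ a b = gaInv R n q qi r δ a c * gaInv R n q qi r δ (c + 1) b := by
  unfold gaInv
  have hl : List.range' a (b + 1 - a) =
      List.range' a (c + 1 - a) ++ List.range' (c + 1) (b + 1 - (c + 1)) := by
    have h3 := List.range'_append_1 (s := a) (m := c + 1 - a) (n := b - c)
    rw [show a + (c + 1 - a) = c + 1 by omega] at h3
    rw [show c + 1 - a + (b - c) = b + 1 - a by omega] at h3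
    rw [show b + 1 - (c + 1) = b - c by omega]
    exact h3.symm
  rw [hl, List.map_append, List.prod_append]

lemma ek_comm_G : ∀ k j : ℕ, 2 * k + 1 ≤ j → j < n →
    Commute (ek R n q qi r δ k) (G R n q qi r δ j) := by
  intro k
  induction k with
  | zero => intro j _ _; exact Commute.one_left _
  | succ k ih =>
      intro j hj hjn
      show Commute (E R n q qi r δ * ga R n q qi r δ 2 (2 * k + 1) *
        gaInv R n q qi r δ 1 (2 * k) * ek R n q qi r δ k) (G R n q qi r δ j)
      have hE : Commute (E R n q qi r δ) (G R n q qi r δ j) :=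
        E_G_comm R n q qi r δ (by omega) hjn
      have hga : Commute (G R n q qi r δ j) (ga R n q qi r δ 2 (2 * k + 1)) :=
        commute_ga R n q qi r δ 2 (2 * k + 1)
          (fun i hi1 hi2 => (G_comm R n q qi r δ (by omega) (by omega) hjn).symm)
      have hgaI : Commute (G R n q qi r δ j) (gaInv R n q qi r δ 1 (2 * k)) :=
        commute_gaInv R n q qi r δ 1 (2 * k)
          (fun i hi1 hi2 => (G_comm R n q qi r δ (by omega) (by omega) hjn).symm)
      exact ((hE.mul_left hga.symm).mul_left hgaI.symm).mul_left (ih j (by omega) hjn)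

end aux

end qB


open qB in
/-- `e (g_2 ⋯ g_{j_2})(g_1⁻¹ ⋯ g_{j_1}⁻¹) e_(k)
  = e_(k+1) (g_{2k+2} ⋯ g_{j_2})(g_{2k+1}⁻¹ ⋯ g_{j_1}⁻¹)`. -/
theorem stmt12 (R : Type) [CommRing R] (n : ℕ) (q qi r ri δ : R)
    (hq : q * qi = 1) (hr : r * ri = 1) (hδ : (q - 1) * δ = r - 1)
    (k j1 j2 : ℕ) (hk : 1 ≤ k) (hn : 2 * k + 2 ≤ n)
    (hj1 : 2 * k ≤ j1) (hj1' : j1 ≤ n - 1) (hj2 : 2 * k + 1 ≤ j2) (hj2' : j2 ≤ n - 1) :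
    E R n q qi r δ * ga R n q qi r δ 2 j2 * gaInv R n q qi r δ 1 j1 * ek R n q qi r δ k =
      ek R n q qi r δ (k + 1) * ga R n q qi r δ (2 * k + 2) j2 *
        gaInv R n q qi r δ (2 * k + 1) j1 := by
  have hn1 : 1 ≤ n := by omega
  set A := E R n q qi r δ with hA
  set B := ga R n q qi r δ 2 (2 * k + 1) with hB
  set C := ga R n q qi r δ (2 * k + 2) j2 with hC
  set D := gaInv R n q qi r δ 1 (2 * k) with hD
  set F := gaInv R n q qi r δ (2 * k + 1) j1 with hF
  set K := ek R n q qi r δ k with hK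
  have hsplit2 : ga R n q qi r δ 2 j2 = B * C := by
    have := ga_split R n q qi r δ 2 (2 * k + 1) j2 (by omega) (by omega)
    simpa [show 2 * k + 1 + 1 = 2 * k + 2 by omega] using this
  have hsplit1 : gaInv R n q qi r δ 1 j1 = D * F := by
    exact gaInv_split R n q qi r δ 1 (2 * k) j1 (by omega) (by omega)
  have hekdef : ek R n q qi r δ (k + 1) = A * B * D * K := rfl
  have hCD : Commute C D := by
    apply (commute_gaInv R n q qi r δ 1 (2 * k) ?_)
    intro m hm1 hm2
    exact (commute_ga R n q qi r δ (2 * k + 2) j2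
      (fun i hi1 hi2 => G_comm R n q qi r δ (by omega) (by omega) (by omega))).symm
  have hCK : Commute C K := by
    refine (commute_ga R n q qi r δ (2 * k + 2) j2 ?_).symm
    intro i hi1 hi2
    exact ek_comm_G R n q qi r δ k i (by omega) (by omega)
  have hFK : Commute F K := by
    refine (commute_gaInv R n q qi r δ (2 * k + 1) j1 ?_).symm
    intro i hi1 hi2
    exact ek_comm_G R n q qi r δ k i (by omega) (by omega)
  rw [hsplit2, hsplit1, hekdef]
  simp only [mul_assoc]
  rw [show F * K = K * F from hFK.eq]
  rw [show C * (D * (K * F)) = D * (C * (K * F)) from by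
    rw [← mul_assoc, hCD.eq, mul_assoc]]
  rw [show C * (K * F) = K * (C * F) from by
    rw [← mul_assoc, hCK.eq, mul_assoc]]
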